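/- For every b ≥ 1 and every d ∈ {1, …, D}, the least element of the set of minimizers over p ∈ 𝒫 of the Bellman expression Cb(b) + Cp(p) + s(p)·J(b−1,D) + (1−s(p))·(if d = 1 then Cd + J(b−1,D) else J(b,d−1)) is equal to μ(b,d), the least element of the set of minimizers over p ∈ 𝒫 of Cp(p) − s(p)·(Cd + σ(b,d−1)). -/

import Mathlib

/-- The least minimizer of the Bellman expression over `p ∈ 𝒫` coincides with
the policy `μ(b,d)`, the least minimizer of `Cp p - s p * (Cd + σ(b,d-1))`. -/
theorem bellman_argmin_eq_mu
    (P : Finset ℝ) (hP : P.Nonempty) (hPnn : ∀ p ∈ P, (0:ℝ) ≤ p)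
    (Cp : ℝ → ℝ) (hCp : Monotone Cp) (hCp0 : ∀ p, 0 ≤ Cp p)
    (Cb : ℕ → ℝ) (hCb : Monotone Cb) (hCb0 : ∀ b, 0 ≤ Cb b)
    (Cd : ℝ) (hCd : 0 ≤ Cd)
    (s : ℝ → ℝ) (hs : Monotone s) (hs0 : ∀ p, 0 ≤ s p) (hs1 : ∀ p, s p ≤ 1)
    (δ : ℕ → ℕ → ℝ)
    (hδ : ∀ b d, 1 ≤ d → δ b d =
      Cb b + P.inf' hP (fun p => Cp p - s p * (Cd + ∑ k ∈ Finset.Icc 1 (d-1), δ b k)))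
    (σ : ℕ → ℕ → ℝ)
    (hσ : ∀ b d, σ b d = ∑ k ∈ Finset.Icc 1 d, δ b k)
    (μ : ℕ → ℕ → ℝ)
    (hμ : ∀ b d, 1 ≤ d → IsLeast
      {p | p ∈ P ∧ ∀ q ∈ P,
        Cp p - s p * (Cd + σ b (d-1)) ≤ Cp q - s q * (Cd + σ b (d-1))} (μ b d))
    (D : ℕ) (hD : 1 ≤ D)
    (J : ℕ → ℕ → ℝ)
    (hJ0 : ∀ d, J 0 d = 0)
    (hJ : ∀ b d, 1 ≤ b → 1 ≤ d → d ≤ D → J b d =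
      P.inf' hP (fun p => Cb b + Cp p + s p * J (b-1) D +
        (1 - s p) * (if d = 1 then Cd + J (b-1) D else J b (d-1)))) :
    ∀ b d : ℕ, 1 ≤ b → 1 ≤ d → d ≤ D →
      IsLeast {p | p ∈ P ∧ ∀ q ∈ P,
        Cb b + Cp p + s p * J (b-1) D +
          (1 - s p) * (if d = 1 then Cd + J (b-1) D else J b (d-1)) ≤
        Cb b + Cp q + s q * J (b-1) D +
          (1 - s q) * (if d = 1 then Cd + J (b-1) D else J b (d-1))} (μ b d) := by
  intro b d hb hd hdD
  -- pulling a constant out of `inf'`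
  have inf_add : ∀ (c : ℝ) (g : ℝ → ℝ),
      P.inf' hP (fun p => c + g p) = c + P.inf' hP g := by
    intro c g
    apply le_antisymm
    · obtain ⟨q, hq, hqe⟩ := P.exists_mem_eq_inf' hP g
      rw [hqe]
      exact Finset.inf'_le (fun p => c + g p) hq
    · apply Finset.le_inf'
      intro q hq
      exact add_le_add_right (Finset.inf'_le g hq) c
  have hσ0 : σ b 0 = 0 := by rw [hσ]; simp
  have hσsucc : ∀ k, σ b (k+1) = σ b k + δ b (k+1) := by
    intro k
    rw [hσ, hσ, Finset.sum_Icc_succ_top (by omega)]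
  have hδ' : ∀ e, 1 ≤ e → δ b e =
      Cb b + P.inf' hP (fun p => Cp p - s p * (Cd + σ b (e-1))) := by
    intro e he
    rw [hδ b e he, hσ b (e-1)]
  -- key structural identity
  have L : ∀ e, 1 ≤ e → e ≤ D → J b e = J (b-1) D + Cd + σ b e := by
    intro e
    induction e with
    | zero => intro h; omega
    | succ n ih =>
      intro _ hle
      rw [hJ b (n+1) hb (by omega) hle]
      by_cases hn : n = 0
      · subst hn
        simp only [if_pos rfl, if_true]
        have hfun : (fun p => Cb b + Cp p + s p * J (b-1) D +
            (1 - s p) * (Cd + J (b-1) D))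
            = fun p => (Cd + J (b-1) D + Cb b) + (Cp p - s p * (Cd + σ b 0)) := by
          funext p; rw [hσ0]; ring
        rw [hfun, inf_add, hσsucc 0, hδ' 1 le_rfl,
          show σ b (1-1) = σ b 0 from rfl, hσ0]
        ring
      · have hn1 : 1 ≤ n := by omega
        have ihh := ih hn1 (by omega)
        simp only [if_neg (by omega : ¬ n+1 = 1)]
        have hred : (n+1-1 : ℕ) = n := rfl
        have hfun : (fun p => Cb b + Cp p + s p * J (b-1) D +
            (1 - s p) * J b (n+1-1))
            = fun p => (J (b-1) D + Cd + σ b n + Cb b) +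
              (Cp p - s p * (Cd + σ b n)) := by
          funext p; rw [hred, ihh]; ring
        rw [hfun, inf_add, hσsucc n, hδ' (n+1) (by omega), hred]
        ring
  -- the "continuation value" equals J(b-1,D) + Cd + σ(b,d-1)
  have hX : (if d = 1 then Cd + J (b-1) D else J b (d-1)) =
      J (b-1) D + Cd + σ b (d-1) := by
    by_cases h1 : d = 1
    · subst h1
      simp only [if_pos rfl]
      norm_num [hσ0]
      ring
    · rw [if_neg h1]
      exact L (d-1) (by omega) (by omega)
  have hBe : ∀ p : ℝ, Cb b + Cp p + s p * J (b-1) D +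
      (1 - s p) * (J (b-1) D + Cd + σ b (d-1)) =
      (Cb b + J (b-1) D + Cd + σ b (d-1)) + (Cp p - s p * (Cd + σ b (d-1))) := by
    intro p; ring
  have hset : {p | p ∈ P ∧ ∀ q ∈ P,
        Cb b + Cp p + s p * J (b-1) D +
          (1 - s p) * (if d = 1 then Cd + J (b-1) D else J b (d-1)) ≤
        Cb b + Cp q + s q * J (b-1) D +
          (1 - s q) * (if d = 1 then Cd + J (b-1) D else J b (d-1))} =
      {p | p ∈ P ∧ ∀ q ∈ P,
        Cp p - s p * (Cd + σ b (d-1)) ≤ Cp q - s q * (Cd + σ b (d-1))} := by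
    ext p
    simp only [Set.mem_setOf_eq, hX, hBe, add_le_add_iff_left]
  rw [hset]
  exact hμ b d hd
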